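/- For every nonempty class F ⊆ [0,1]^X of binary-label experts and every horizon T ≥ 1, the minimax regret satisfies R_T(F) ≤ inf_{α > 0} { T·log(1 + 2α) + H∞(F, α, T) }. -/

import Mathlib

open scoped BigOperators

/-- The probability simplex on a finite label set `Y`. -/
abbrev Simplex (Y : Type*) [Fintype Y] :=
  {p : Y → ℝ // (∀ y, 0 ≤ p y) ∧ ∑ y, p y = 1}

/-- A sequential expert: given contexts `x₁,…,x_t` (a list of length `t`) and past labels
`y₁,…,y_{t-1}` (a list of length `t-1`), it predicts a distribution over labels. -/
abbrev Expert (X Y : Type*) [Fintype Y] := List X → List Y → Simplex Y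

/-- `-log x` as an extended real, with `-log 0 = ⊤` (and junk value `⊤` for `x < 0`). -/
noncomputable def negLog (x : ℝ) : EReal :=
  if x ≤ 0 then ⊤ else ((-Real.log x : ℝ) : EReal)

/-- `log x` as an extended real, with `log 0 = ⊥` (and junk value `⊥` for `x < 0`). -/
noncomputable def elog (x : ℝ) : EReal :=
  if x ≤ 0 then ⊥ else ((Real.log x : ℝ) : EReal)

/-- The logarithmic loss `ℓ(p, y) = -log p(y) ∈ [0, ∞]`. -/
noncomputable def logloss {Y : Type*} [Fintype Y] (p : Simplex Y) (y : Y) : EReal :=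
  negLog (p.1 y)

/-- Likelihood of expert `f` on a context sequence `xs` and a label sequence `ys`
of the same length: `L(f; y_{1:d} | x_{1:d}) = ∏_{t=1}^d f(x_{1:t}, y_{1:t-1})(y_t)`. -/
noncomputable def likelihood {X Y : Type*} [Fintype Y] [Inhabited Y]
    (f : Expert X Y) (xs : List X) (ys : List Y) : ℝ :=
  ∏ t ∈ Finset.range ys.length, (f (xs.take (t + 1)) (ys.take t)).1 (ys.getD t default)

/-- Cumulative log loss of expert `f` on `xs`, `ys`:
`Σ_{t=1}^d ℓ(f(x_{1:t}, y_{1:t-1}), y_t)`. -/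
noncomputable def cumLoss {X Y : Type*} [Fintype Y] [Inhabited Y]
    (f : Expert X Y) (xs : List X) (ys : List Y) : EReal :=
  ∑ t ∈ Finset.range ys.length, logloss (f (xs.take (t + 1)) (ys.take t)) (ys.getD t default)

/-- A context tree of depth `T` is modelled as a map `χ : List Y → X` (only its values on
lists of length `< T` matter): `x_t(y) = χ (y_{1:t-1})`.  `treePath χ ys` is the context
sequence `x(y) = (x_1, x_2(y_1), …)` obtained by tracing the tree along the path `ys`. -/
def treePath {X Y : Type*} (χ : List Y → X) (ys : List Y) : List X :=
  (List.range ys.length).map fun t => χ (ys.take t)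

/-- The contextual Shtarkov sum of `F` on a context tree `χ` of depth `r`, with prefix
`xs ∈ X^t`, `ys ∈ Y^t`:
`S_T(F, χ | x_{1:t}, y_{1:t}) = Σ_{y ∈ Y^r} sup_{f ∈ F} L(f; (y_{1:t}, y) | (x_{1:t}, χ(y)))`. -/
noncomputable def shtarkovPrefix {X Y : Type*} [Fintype Y] [Inhabited Y]
    (F : Set (Expert X Y)) (r : ℕ) (χ : List Y → X) (xs : List X) (ys : List Y) : ℝ :=
  ∑ y : Fin r → Y, ⨆ f : F,
    likelihood (f : Expert X Y) (xs ++ treePath χ (List.ofFn y)) (ys ++ List.ofFn y)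

/-- The contextual Shtarkov sum `S_T(F | χ) = Σ_{y ∈ Y^T} sup_{f ∈ F} L(f; y | χ(y))`. -/
noncomputable def shtarkov {X Y : Type*} [Fintype Y] [Inhabited Y]
    (F : Set (Expert X Y)) (T : ℕ) (χ : List Y → X) : ℝ :=
  shtarkovPrefix F T χ [] []

/-- The extensive-form game value with `r` rounds to go, given past contexts `xs`, past
labels `ys`, and accumulated learner loss `acc`:
`sup_{x} inf_{p̂} sup_{y} ⋯ [ acc + Σ ℓ(p̂_s, y_s) − inf_{f ∈ F} Σ_{s=1}^T ℓ(f, y_s) ]`. -/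
noncomputable def valToGo {X Y : Type*} [Fintype Y] [Inhabited Y]
    (F : Set (Expert X Y)) : ℕ → List X → List Y → EReal → EReal
  | 0, xs, ys, acc => acc - ⨅ f : F, cumLoss (f : Expert X Y) xs ys
  | r + 1, xs, ys, acc =>
      ⨆ x : X, ⨅ p : Simplex Y, ⨆ y : Y,
        valToGo F r (xs ++ [x]) (ys ++ [y]) (acc + logloss p y)

/-- The minimax regret
`R_T(F) = sup_{x_1} inf_{p̂_1} sup_{y_1} ⋯ sup_{x_T} inf_{p̂_T} sup_{y_T} R_T(F; p̂, x, y)`. -/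
noncomputable def minimaxRegret {X Y : Type*} [Fintype Y] [Inhabited Y]
    (F : Set (Expert X Y)) (T : ℕ) : EReal :=
  valToGo F T [] [] 0

/-- Nested conditional expectation over a probabilistic tree `π`, for `r` remaining rounds:
`E_{y_1 ∼ π([])} E_{y_2 ∼ π(y_{1:1})} ⋯ [g(y_{1:r})]`. -/
noncomputable def expTree {Y : Type*} [Fintype Y] (π : List Y → Simplex Y)
    (g : List Y → EReal) : ℕ → List Y → EReal
  | 0, pre => g pre
  | r + 1, pre => ∑ y : Y, ((π pre).1 y : EReal) * expTree π g r (pre ++ [y])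

/-- The dual (max-min) value-to-go `W(F, x_{1:t}, y_{1:t})`: the supremum over context trees
`χ` and probabilistic trees `π` of depth `r = T - t` of
`E_{y∼π}[ Σ_{s=t+1}^T ℓ(π_s(y), y_s) − inf_{f ∈ F} Σ_{s=1}^T ℓ(f, y_s) ]`. -/
noncomputable def dualValToGo {X Y : Type*} [Fintype Y] [Inhabited Y]
    (F : Set (Expert X Y)) (r : ℕ) (xs : List X) (ys : List Y) : EReal :=
  ⨆ χ : List Y → X, ⨆ π : List Y → Simplex Y,
    expTree π (fun suf =>
      (∑ s ∈ Finset.range r, logloss (π (suf.take s)) (suf.getD s default)) -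
        ⨅ f : F, cumLoss (f : Expert X Y) (xs ++ treePath χ suf) (ys ++ suf)) r []

/-- The dual (max-min) value `V_T(F)`. -/
noncomputable def dualValue {X Y : Type*} [Fintype Y] [Inhabited Y]
    (F : Set (Expert X Y)) (T : ℕ) : EReal :=
  dualValToGo F T [] []
/-- A binary-label expert class member: a function `X → [0,1]`. -/
abbrev UnitFn (X : Type*) := X → Set.Icc (0 : ℝ) 1

/-- The Bernoulli distribution on `Bool` with mean `r ∈ [0,1]` (label `true` ↔ `1`). -/
noncomputable def bernoulliOn (r : Set.Icc (0 : ℝ) 1) : Simplex Bool :=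
  ⟨fun b => if b then (r : ℝ) else 1 - (r : ℝ), by
    constructor
    · intro b
      cases b with
      | false => simpa using r.2.2
      | true => simpa using r.2.1
    · rw [Fintype.sum_bool]
      simp⟩

/-- The sequential expert induced by `f : X → [0,1]`: it predicts the Bernoulli
distribution with mean `f(x_t)`, where `x_t` is the most recent context. -/
noncomputable def bexpert {X : Type*} [Inhabited X] (f : UnitFn X) : Expert X Bool :=
  fun xs _ => bernoulliOn (f (xs.getLast?.getD default))

/-- `V` is a sequential `ℓ∞` cover of `F ∘ χ` at scale `α` and depth `T`: for every `f ∈ F`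
and every path `y ∈ {0,1}^T` there is a tree `v ∈ V` with
`|f(x_t(y)) − v_t(y)| ≤ α` for all `t ∈ [T]`. -/
def IsSeqCover {X : Type*} (F : Set (UnitFn X)) (χ : List Bool → X) (α : ℝ) (T : ℕ)
    (V : Finset (List Bool → ℝ)) : Prop :=
  ∀ f ∈ F, ∀ y : Fin T → Bool, ∃ v ∈ V, ∀ t : Fin T,
    |(f (χ ((List.ofFn y).take t)) : ℝ) - v ((List.ofFn y).take t)| ≤ α

/-- The sequential `ℓ∞` covering number `N∞(F∘χ, α, T)`: size of the smallest cover
(`⊤` if no finite cover exists). -/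
noncomputable def coveringNumber {X : Type*} (F : Set (UnitFn X)) (χ : List Bool → X)
    (α : ℝ) (T : ℕ) : ℕ∞ :=
  ⨅ (V : Finset (List Bool → ℝ)) (_ : IsSeqCover F χ α T V), (V.card : ℕ∞)

/-- `log` of an extended natural number, valued in the extended reals. -/
noncomputable def elogENat (n : ℕ∞) : EReal :=
  WithTop.recTopCoe ⊤ (fun k => elog (k : ℝ)) n

/-- An extended natural number as an extended real. -/
noncomputable def enatToEReal (n : ℕ∞) : EReal :=
  WithTop.recTopCoe ⊤ (fun k => ((k : ℝ) : EReal)) n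

/-- The sequential `ℓ∞` entropy `H∞(F, α, T) = sup_χ log N∞(F∘χ, α, T)`. -/
noncomputable def seqEntropy {X : Type*} (F : Set (UnitFn X)) (α : ℝ) (T : ℕ) : EReal :=
  ⨆ χ : List Bool → X, elogENat (coveringNumber F χ α T)

lemma negLog_ne_bot (x : ℝ) : negLog x ≠ ⊥ := by
  unfold negLog; split <;> simp

lemma neg_negLog (x : ℝ) : -negLog x = elog x := by
  unfold negLog elog; split <;> simp

lemma negLog_antitone {x y : ℝ} (h : x ≤ y) : negLog y ≤ negLog x := by
  unfold negLog
  by_cases hx : x ≤ 0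
  · simp [hx]
  · have hy : ¬ y ≤ 0 := fun hy => hx (h.trans hy)
    rw [if_neg hx, if_neg hy]
    exact EReal.coe_le_coe_iff.mpr (neg_le_neg (Real.log_le_log (not_le.mp hx) h))

lemma elog_monotone {x y : ℝ} (h : x ≤ y) : elog x ≤ elog y := by
  rw [← neg_negLog, ← neg_negLog]
  exact EReal.neg_le_neg_iff.mpr (negLog_antitone h)

lemma negLog_mul {a b : ℝ} (ha : 0 ≤ a) (hb : 0 ≤ b) :
    negLog (a * b) = negLog a + negLog b := by
  rcases eq_or_lt_of_le ha with h | ha'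
  · rw [← h, zero_mul]
    rw [show negLog 0 = ⊤ from by simp [negLog],
      EReal.top_add_of_ne_bot (negLog_ne_bot b)]
  rcases eq_or_lt_of_le hb with h | hb'
  · rw [← h, mul_zero]
    rw [show negLog 0 = ⊤ from by simp [negLog],
      EReal.add_top_of_ne_bot (negLog_ne_bot a)]
  · rw [negLog, negLog, negLog, if_neg (not_le.mpr ha'), if_neg (not_le.mpr hb'),
      if_neg (not_le.mpr (mul_pos ha' hb')), Real.log_mul ha'.ne' hb'.ne']
    rw [← EReal.coe_add]; norm_num [add_comm]

lemma sum_negLog {ι : Type*} (s : Finset ι) (g : ι → ℝ) (hg : ∀ i ∈ s, 0 ≤ g i) :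
    ∑ i ∈ s, negLog (g i) = negLog (∏ i ∈ s, g i) := by
  induction s using Finset.cons_induction with
  | empty => norm_num [negLog, Real.log_one]
  | cons a s hnotmem ih =>
      rw [Finset.sum_cons, Finset.prod_cons,
        negLog_mul (hg a (Finset.mem_cons_self a s))
          (Finset.prod_nonneg fun i hi => hg i (Finset.mem_cons_of_mem hi)),
        ih fun i hi => hg i (Finset.mem_cons_of_mem hi)]

lemma elog_le_coe_iff {x c : ℝ} : elog x ≤ (c : EReal) ↔ x ≤ Real.exp c := by
  unfold elog
  split
  · simp only [bot_le, true_iff]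
    exact le_trans (by assumption) (Real.exp_pos c).le
  · push_neg at *
    rw [EReal.coe_le_coe_iff, Real.log_le_iff_le_exp (by assumption)]

lemma elog_ciSup_le {ι : Type*} [Nonempty ι] (g : ι → ℝ)
    (b : EReal) (h : ∀ i, elog (g i) ≤ b) : elog (⨆ i, g i) ≤ b := by
  induction b using EReal.rec with
  | top => exact le_top
  | bot =>
      have hg : ∀ i, g i ≤ 0 := by
        intro i
        have := h i
        by_contra hgi
        rw [elog, if_neg hgi] at this
        exact (EReal.coe_ne_bot _) (le_bot_iff.mp this)
      have : (⨆ i, g i) ≤ 0 := ciSup_le hg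
      simp [elog, this]
  | coe c =>
      rw [elog_le_coe_iff]
      exact ciSup_le fun i => elog_le_coe_iff.mp (h i)

lemma elog_coe_mul {a b : ℝ} (ha : 0 < a) (hb : 0 < b) :
    elog (a * b) = (Real.log a : EReal) + elog b := by
  rw [elog, elog, if_neg (not_le.mpr hb), if_neg (not_le.mpr (mul_pos ha hb)),
    Real.log_mul ha.ne' hb.ne', EReal.coe_add]


section Basic
variable {X Y : Type*} [Fintype Y] [Inhabited Y]

lemma simplex_nonneg (p : Simplex Y) (y : Y) : 0 ≤ p.1 y := p.2.1 y

lemma simplex_le_one (p : Simplex Y) (y : Y) : p.1 y ≤ 1 := by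
  calc p.1 y ≤ ∑ z, p.1 z :=
        Finset.single_le_sum (fun z _ => p.2.1 z) (Finset.mem_univ y)
    _ = 1 := p.2.2

lemma likelihood_nonneg (f : Expert X Y) (xs : List X) (ys : List Y) :
    0 ≤ likelihood f xs ys :=
  Finset.prod_nonneg fun _ _ => simplex_nonneg _ _

lemma likelihood_le_one (f : Expert X Y) (xs : List X) (ys : List Y) :
    likelihood f xs ys ≤ 1 :=
  Finset.prod_le_one (fun _ _ => simplex_nonneg _ _) (fun _ _ => simplex_le_one _ _)

lemma cumLoss_eq (f : Expert X Y) (xs : List X) (ys : List Y) :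
    cumLoss f xs ys = negLog (likelihood f xs ys) := by
  unfold cumLoss likelihood logloss
  exact sum_negLog _ _ fun t _ => simplex_nonneg _ _

lemma bddAbove_of_le {ι : Type*} {g : ι → ℝ} {c : ℝ} (h : ∀ i, g i ≤ c) :
    BddAbove (Set.range g) :=
  ⟨c, by rintro _ ⟨i, rfl⟩; exact h i⟩

variable (F : Set (Expert X Y))

lemma bdd_lik (xs : List X) (ys : List Y) :
    BddAbove (Set.range fun f : F => likelihood (f : Expert X Y) xs ys) :=
  bddAbove_of_le fun f => likelihood_le_one _ _ _

lemma shtarkovPrefix_term_nonneg (hF : F.Nonempty) (xs : List X) (ys : List Y) :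
    0 ≤ ⨆ f : F, likelihood (f : Expert X Y) xs ys := by
  haveI : Nonempty F := hF.to_subtype
  obtain ⟨f0⟩ := ‹Nonempty F›
  exact (likelihood_nonneg (f0 : Expert X Y) xs ys).trans (le_ciSup (bdd_lik F xs ys) f0)

lemma shtarkovPrefix_nonneg (hF : F.Nonempty) (r : ℕ) (χ : List Y → X)
    (xs : List X) (ys : List Y) : 0 ≤ shtarkovPrefix F r χ xs ys :=
  Finset.sum_nonneg fun y _ => shtarkovPrefix_term_nonneg F hF _ _

lemma shtarkovPrefix_le (hF : F.Nonempty) (r : ℕ) (χ : List Y → X)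
    (xs : List X) (ys : List Y) :
    shtarkovPrefix F r χ xs ys ≤ (Fintype.card (Fin r → Y) : ℝ) := by
  haveI : Nonempty F := hF.to_subtype
  calc shtarkovPrefix F r χ xs ys ≤ ∑ _y : Fin r → Y, (1 : ℝ) :=
        Finset.sum_le_sum fun y _ => ciSup_le fun f => likelihood_le_one _ _ _
    _ = (Fintype.card (Fin r → Y) : ℝ) := by simp

lemma bdd_shtarkov (hF : F.Nonempty) (r : ℕ) (xs : List X) (ys : List Y) :
    BddAbove (Set.range fun χ : List Y → X => shtarkovPrefix F r χ xs ys) :=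
  bddAbove_of_le fun χ => shtarkovPrefix_le F hF r χ xs ys

lemma treePath_cons (χ : List Y → X) (a : Y) (l : List Y) :
    treePath χ (a :: l) = χ [] :: treePath (fun s => χ (a :: s)) l := by
  unfold treePath
  simp [List.range_succ_eq_map, List.map_map, Function.comp_def]

lemma shtarkovPrefix_succ (r : ℕ) (χ : List Y → X) (xs : List X) (ys : List Y) :
    shtarkovPrefix F (r + 1) χ xs ys =
      ∑ a : Y, shtarkovPrefix F r (fun s => χ (a :: s)) (xs ++ [χ []]) (ys ++ [a]) := by
  unfold shtarkovPrefix
  rw [← (Fin.consEquiv (fun _ : Fin (r+1) => Y)).sum_comp, Fintype.sum_prod_type]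
  refine Finset.sum_congr rfl fun a _ => Finset.sum_congr rfl fun t _ => ?_
  have hofn : List.ofFn (Fin.cons a t : Fin (r+1) → Y) = a :: List.ofFn t := by
    rw [List.ofFn_succ]
    simp
  show (⨆ f : F, likelihood (f : Expert X Y)
      (xs ++ treePath χ (List.ofFn (Fin.cons a t))) (ys ++ List.ofFn (Fin.cons a t))) = _
  rw [hofn, treePath_cons]
  congr 1 <;> simp [List.append_assoc]

lemma shtarkovPrefix_zero (χ : List Y → X) (xs : List X) (ys : List Y) :
    shtarkovPrefix F 0 χ xs ys = ⨆ f : F, likelihood (f : Expert X Y) xs ys := by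
  unfold shtarkovPrefix
  rw [Fintype.sum_subsingleton _ (fun i : Fin 0 => i.elim0)]
  simp [treePath, List.ofFn_zero]

end Basic


section ValBound
variable {X : Type*} [Inhabited X]

lemma valToGo_le (F : Set (Expert X Bool)) (hF : F.Nonempty) (r : ℕ) :
    ∀ (xs : List X) (ys : List Bool) (acc : EReal),
      valToGo F r xs ys acc ≤
        acc + elog (⨆ χ : List Bool → X, shtarkovPrefix F r χ xs ys) := by
  haveI : Nonempty F := hF.to_subtype
  induction r with
  | zero =>
      intro xs ys acc
      have hsh : (⨆ χ : List Bool → X, shtarkovPrefix F 0 χ xs ys) =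
          ⨆ f : F, likelihood (f : Expert X Bool) xs ys := by
        simp only [shtarkovPrefix_zero]
        exact ciSup_const
      rw [hsh]
      show acc - (⨅ f : F, cumLoss (f : Expert X Bool) xs ys) ≤ _
      rw [sub_eq_add_neg]
      apply add_le_add le_rfl
      have h1 : negLog (⨆ f : F, likelihood (f : Expert X Bool) xs ys) ≤
          ⨅ f : F, cumLoss (f : Expert X Bool) xs ys := by
        refine le_iInf fun f => ?_
        rw [cumLoss_eq]
        exact negLog_antitone (le_ciSup (bdd_lik F xs ys) f)
      calc -(⨅ f : F, cumLoss (f : Expert X Bool) xs ys)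
          ≤ -negLog (⨆ f : F, likelihood (f : Expert X Bool) xs ys) :=
            EReal.neg_le_neg_iff.mpr h1
        _ = _ := neg_negLog _
  | succ r ih =>
      intro xs ys acc
      show (⨆ x : X, ⨅ p : Simplex Bool, ⨆ y : Bool,
          valToGo F r (xs ++ [x]) (ys ++ [y]) (acc + logloss p y)) ≤ _
      refine iSup_le fun x => ?_
      set s : Bool → ℝ := fun a =>
        ⨆ χ : List Bool → X, shtarkovPrefix F r χ (xs ++ [x]) (ys ++ [a]) with hs
      have hs_nonneg : ∀ a, 0 ≤ s a := fun a =>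
        (shtarkovPrefix_nonneg F hF r (fun _ => x) _ _).trans
          (le_ciSup (bdd_shtarkov F hF r _ _) _)
      set S : ℝ := s true + s false with hSdef
      set W : ℝ := ⨆ χ : List Bool → X, shtarkovPrefix F (r+1) χ xs ys with hW
      have hSW : S ≤ W := by
        rw [hSdef, hs]
        rw [ciSup_add (bdd_shtarkov F hF r _ _)]
        refine ciSup_le fun χt => ?_
        rw [add_ciSup (bdd_shtarkov F hF r _ _)]
        refine ciSup_le fun χf => ?_
        set χ' : List Bool → X := fun l =>
          match l with
          | [] => x
          | a :: u => if a then χt u else χf u with hχ'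
        have h1 : shtarkovPrefix F (r+1) χ' xs ys =
            shtarkovPrefix F r χt (xs ++ [x]) (ys ++ [true]) +
              shtarkovPrefix F r χf (xs ++ [x]) (ys ++ [false]) := by
          rw [shtarkovPrefix_succ, Fintype.sum_bool]
          rfl
        rw [← h1]
        exact le_ciSup (bdd_shtarkov F hF (r+1) _ _) χ'
      rcases le_or_gt S 0 with hS0 | hSpos
      · -- degenerate: both s a = 0
        have hsz : ∀ a, s a = 0 := by
          intro a
          have h1 := hs_nonneg true
          have h2 := hs_nonneg false
          cases a <;> simp only [hSdef] at hS0 <;> linarith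
        refine le_trans (iInf_le _ ⟨fun _ => (2:ℝ)⁻¹, fun _ => by norm_num, by
          rw [Fintype.sum_bool]; norm_num⟩) ?_
        refine le_trans (iSup_le fun a => le_trans (ih _ _ _) ?_) bot_le
        rw [show (⨆ χ : List Bool → X,
            shtarkovPrefix F r χ (xs ++ [x]) (ys ++ [a])) = s a from rfl, hsz a]
        simp [elog]
      · -- main case
        have hSne : S ≠ 0 := hSpos.ne'
        set p : Simplex Bool := ⟨fun a => s a / S, fun a => div_nonneg (hs_nonneg a)
            hSpos.le, by rw [Fintype.sum_bool]; field_simp; exact hSdef.symm⟩ with hp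
        refine le_trans (iInf_le _ p) (iSup_le fun a => le_trans (ih _ _ _) ?_)
        rw [show (⨆ χ : List Bool → X,
          shtarkovPrefix F r χ (xs ++ [x]) (ys ++ [a])) = s a from rfl]
        rw [add_assoc]
        apply add_le_add le_rfl
        have hll : logloss p a = negLog (s a / S) := rfl
        rw [hll]
        have key : negLog (s a / S) + elog (s a) ≤ elog S := by
          rcases eq_or_lt_of_le (hs_nonneg a) with h0 | hpos
          · rw [← h0]
            rw [show elog 0 = ⊥ from by simp [elog]]
            simp
          · have hq : 0 < s a / S := div_pos hpos hSpos
            rw [negLog, if_neg (not_le.mpr hq), elog, if_neg (not_le.mpr hpos),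
              elog, if_neg (not_le.mpr hSpos), ← EReal.coe_add,
              EReal.coe_le_coe_iff, Real.log_div hpos.ne' hSne]
            ring_nf
            exact le_refl _
        exact le_trans key (elog_monotone hSW)

end ValBound


section Cover
variable {X : Type*} [Inhabited X]

/-- clamp to `[0,1]`. -/
noncomputable def clampUnit (w : ℝ) : ℝ := max 0 (min 1 w)

lemma clampUnit_mem (w : ℝ) : 0 ≤ clampUnit w ∧ clampUnit w ≤ 1 :=
  ⟨le_max_left _ _, max_le zero_le_one (min_le_left _ _)⟩

/-- the smoothed prediction associated to a cover element. -/
noncomputable def qfun (α : ℝ) (v : List Bool → ℝ) (l : List Bool) (b : Bool) : ℝ :=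
  ((if b then clampUnit (v l) else 1 - clampUnit (v l)) + α) / (1 + 2 * α)

lemma qfun_nonneg {α : ℝ} (hα : 0 < α) (v : List Bool → ℝ) (l : List Bool) (b : Bool) :
    0 ≤ qfun α v l b := by
  have h := clampUnit_mem (v l)
  unfold qfun
  apply div_nonneg _ (by linarith)
  split <;> linarith

lemma qfun_sum {α : ℝ} (hα : 0 < α) (v : List Bool → ℝ) (l : List Bool) :
    qfun α v l true + qfun α v l false = 1 := by
  unfold qfun
  have : (1 : ℝ) + 2 * α ≠ 0 := by linarith
  rw [← add_div, div_eq_one_iff_eq this]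
  show (clampUnit (v l) + α) + ((1 - clampUnit (v l)) + α) = 1 + 2 * α
  ring

lemma factor_le_qfun {α : ℝ} (hα : 0 < α) {u w : ℝ} (hu0 : 0 ≤ u) (hu1 : u ≤ 1)
    (habs : |u - w| ≤ α) (b : Bool) :
    (if b then u else 1 - u) ≤ (if b then clampUnit w else 1 - clampUnit w) + α := by
  have habs' := abs_le.mp habs
  have hcl := clampUnit_mem w
  cases b
  · norm_num
    have h2 : clampUnit w ≤ u + α :=
      max_le (by linarith) ((min_le_right _ _).trans (by linarith [habs'.1]))
    linarith
  · norm_num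
    have h2 : u - α ≤ min 1 w := le_min (by linarith) (by linarith [habs'.2])
    have h3 : u - α ≤ clampUnit w := h2.trans (le_max_right _ _)
    linarith

lemma treePath_take_getLast (χ : List Bool → X) (l : List Bool) {t : ℕ} (ht : t < l.length) :
    (((treePath χ l).take (t + 1)).getLast?).getD default = χ (l.take t) := by
  unfold treePath
  rw [← List.map_take, List.take_range]
  have hmin : min (t + 1) l.length = t + 1 := min_eq_left (by omega)
  rw [hmin, List.range_succ, List.map_append]
  simp

lemma likelihood_bexpert (f : UnitFn X) (χ : List Bool → X) (l : List Bool) :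
    likelihood (bexpert f) (treePath χ l) l =
      ∏ t ∈ Finset.range l.length,
        (if l.getD t default then (f (χ (l.take t)) : ℝ) else 1 - (f (χ (l.take t)) : ℝ)) := by
  unfold likelihood
  refine Finset.prod_congr rfl fun t ht => ?_
  rw [Finset.mem_range] at ht
  show (bernoulliOn (f ((((treePath χ l).take (t+1)).getLast?).getD default))).1
      (l.getD t default) = _
  rw [treePath_take_getLast χ l ht]
  rfl

set_option maxHeartbeats 1000000 in
lemma tree_sum (p : List Bool → Bool → ℝ)
    (hp : ∀ l, p l true + p l false = 1) :
    ∀ (n : ℕ) (pre : List Bool),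
      ∑ y : Fin n → Bool, ∏ t ∈ Finset.range n,
        p (pre ++ (List.ofFn y).take t) ((List.ofFn y).getD t default) = 1 := by
  intro n
  induction n with
  | zero =>
      intro pre
      rw [Fintype.sum_subsingleton _ (fun i : Fin 0 => i.elim0)]
      simp
  | succ n ih =>
      intro pre
      rw [← (Fin.consEquiv (fun _ : Fin (n+1) => Bool)).sum_comp, Fintype.sum_prod_type]
      have hsum : ∀ a : Bool,
          (∑ t : Fin n → Bool, ∏ i ∈ Finset.range (n+1),
            p (pre ++ (List.ofFn (Fin.cons a t : Fin (n+1) → Bool)).take i)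
              ((List.ofFn (Fin.cons a t : Fin (n+1) → Bool)).getD i default)) = p pre a := by
        intro a
        have hterm : ∀ t : Fin n → Bool,
            (∏ i ∈ Finset.range (n+1),
              p (pre ++ (List.ofFn (Fin.cons a t : Fin (n+1) → Bool)).take i)
                ((List.ofFn (Fin.cons a t : Fin (n+1) → Bool)).getD i default)) =
            p pre a * ∏ i ∈ Finset.range n,
              p ((pre ++ [a]) ++ (List.ofFn t).take i) ((List.ofFn t).getD i default) := by
          intro t
          have hofn : List.ofFn (Fin.cons a t : Fin (n+1) → Bool) = a :: List.ofFn t := by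
            rw [List.ofFn_succ]
            simp
          rw [hofn, Finset.prod_range_succ']
          have h0 : p (pre ++ (a :: List.ofFn t).take 0) ((a :: List.ofFn t).getD 0 default)
              = p pre a := by simp
          rw [h0, mul_comm]
          congr 1
          refine Finset.prod_congr rfl fun i _ => ?_
          rw [List.take_succ_cons, List.getD_cons_succ,
            show pre ++ a :: (List.ofFn t).take i = (pre ++ [a]) ++ (List.ofFn t).take i
              from by simp]
        rw [Finset.sum_congr rfl fun t _ => hterm t, ← Finset.mul_sum, ih (pre ++ [a]),
          mul_one]
      have hequiv : ∀ (a : Bool) (t : Fin n → Bool),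
          ((Fin.consEquiv (fun _ : Fin (n+1) => Bool)) (a, t)) = Fin.cons a t :=
        fun a t => rfl
      simp only [hequiv]
      rw [Finset.sum_congr rfl fun a _ => hsum a, Fintype.sum_bool, hp]

set_option maxHeartbeats 1000000 in
lemma shtarkov_le_cover (F : Set (UnitFn X)) (hF : F.Nonempty) {α : ℝ} (hα : 0 < α)
    (T : ℕ) (χ : List Bool → X) (V : Finset (List Bool → ℝ)) (hV : IsSeqCover F χ α T V) :
    shtarkov (bexpert '' F) T χ ≤ (1 + 2 * α) ^ T * (V.card : ℝ) := by
  haveI : Nonempty ↥(bexpert '' F) := (hF.image _).to_subtype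
  have hpow : (0:ℝ) ≤ (1 + 2 * α) ^ T := pow_nonneg (by linarith) T
  unfold shtarkov shtarkovPrefix
  have hbound : ∀ y : Fin T → Bool,
      (⨆ g : ↥(bexpert '' F), likelihood (g : Expert X Bool)
        ([] ++ treePath χ (List.ofFn y)) ([] ++ List.ofFn y)) ≤
      (1 + 2 * α) ^ T * ∑ v ∈ V, ∏ t ∈ Finset.range T,
        qfun α v ((List.ofFn y).take t) ((List.ofFn y).getD t default) := by
    intro y
    refine ciSup_le fun g => ?_
    obtain ⟨f, hf, hfg⟩ := g.2
    obtain ⟨v, hvV, hv⟩ := hV f hf y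
    rw [List.nil_append, List.nil_append, ← hfg, likelihood_bexpert]
    have hlen : (List.ofFn y).length = T := List.length_ofFn
    rw [hlen]
    calc (∏ t ∈ Finset.range T, (if (List.ofFn y).getD t default then
            (f (χ ((List.ofFn y).take t)) : ℝ) else 1 - (f (χ ((List.ofFn y).take t)) : ℝ)))
        ≤ ∏ t ∈ Finset.range T, (1 + 2 * α) *
            qfun α v ((List.ofFn y).take t) ((List.ofFn y).getD t default) := by
          refine Finset.prod_le_prod (fun t _ => ?_) (fun t ht => ?_)
          · have h2 := (f (χ ((List.ofFn y).take t))).2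
            split <;> simp only [Set.mem_Icc] at h2 <;> [exact h2.1; linarith [h2.2]]
          · rw [Finset.mem_range] at ht
            have h2 := (f (χ ((List.ofFn y).take t))).2
            simp only [Set.mem_Icc] at h2
            have h3 := factor_le_qfun hα h2.1 h2.2 (hv ⟨t, ht⟩)
              ((List.ofFn y).getD t default)
            have h4 : (1 + 2 * α) * qfun α v ((List.ofFn y).take t)
                ((List.ofFn y).getD t default) =
                (if (List.ofFn y).getD t default then clampUnit (v ((List.ofFn y).take t))
                  else 1 - clampUnit (v ((List.ofFn y).take t))) + α := by
              rw [qfun, mul_div_cancel₀ _ (by linarith : (1:ℝ) + 2 * α ≠ 0)]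
            rw [h4]
            exact h3
      _ = (1 + 2 * α) ^ T * ∏ t ∈ Finset.range T,
            qfun α v ((List.ofFn y).take t) ((List.ofFn y).getD t default) := by
          rw [Finset.prod_mul_distrib, Finset.prod_const, Finset.card_range]
      _ ≤ (1 + 2 * α) ^ T * ∑ v' ∈ V, ∏ t ∈ Finset.range T,
            qfun α v' ((List.ofFn y).take t) ((List.ofFn y).getD t default) := by
          apply mul_le_mul_of_nonneg_left _ hpow
          exact Finset.single_le_sum
            (f := fun v' => ∏ t ∈ Finset.range T,
              qfun α v' ((List.ofFn y).take t) ((List.ofFn y).getD t default))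
            (fun v' _ => Finset.prod_nonneg fun t _ => qfun_nonneg hα v' _ _) hvV
  calc (∑ y : Fin T → Bool, ⨆ g : ↥(bexpert '' F), likelihood (g : Expert X Bool)
          ([] ++ treePath χ (List.ofFn y)) ([] ++ List.ofFn y))
      ≤ ∑ y : Fin T → Bool, (1 + 2 * α) ^ T * ∑ v ∈ V, ∏ t ∈ Finset.range T,
          qfun α v ((List.ofFn y).take t) ((List.ofFn y).getD t default) :=
        Finset.sum_le_sum fun y _ => hbound y
    _ = (1 + 2 * α) ^ T * ∑ v ∈ V, ∑ y : Fin T → Bool, ∏ t ∈ Finset.range T,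
          qfun α v ((List.ofFn y).take t) ((List.ofFn y).getD t default) := by
        rw [← Finset.mul_sum, Finset.sum_comm]
    _ = (1 + 2 * α) ^ T * (V.card : ℝ) := by
        congr 1
        rw [Finset.sum_congr rfl fun v _ => ?_, Finset.sum_const, nsmul_eq_mul, mul_one]
        · have := tree_sum (qfun α v) (qfun_sum hα v) T []
          simpa using this
    _ = (1 + 2 * α) ^ T * (V.card : ℝ) := rfl

lemma elogENat_coe (k : ℕ) : elogENat (k : ℕ∞) = elog (k : ℝ) := rfl

lemma elogENat_mono : Monotone elogENat := by
  intro m n h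
  cases n with
  | top => exact le_top
  | coe k =>
      cases m with
      | top => exact absurd h (by simp)
      | coe j =>
          rw [elogENat_coe, elogENat_coe]
          exact elog_monotone (Nat.cast_le.mpr (by exact_mod_cast h))

end Cover


section Final
variable {X : Type*} [Inhabited X]

lemma cover_card_pos {F : Set (UnitFn X)} (hF : F.Nonempty) {χ : List Bool → X} {α : ℝ}
    {T : ℕ} {V : Finset (List Bool → ℝ)} (hV : IsSeqCover F χ α T V) : 1 ≤ V.card := by
  obtain ⟨f, hf⟩ := hF
  obtain ⟨v, hvV, -⟩ := hV f hf (fun _ => true)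
  exact Finset.card_pos.mpr ⟨v, hvV⟩

lemma exists_cover_of_coveringNumber_coe {F : Set (UnitFn X)} {χ : List Bool → X}
    {α : ℝ} {T : ℕ} {k : ℕ} (h : coveringNumber F χ α T = (k : ℕ∞)) :
    ∃ V : Finset (List Bool → ℝ), IsSeqCover F χ α T V ∧ V.card ≤ k := by
  by_contra hcon
  push_neg at hcon
  have hge : ((k + 1 : ℕ) : ℕ∞) ≤ coveringNumber F χ α T := by
    refine le_iInf fun V => le_iInf fun hV => ?_
    exact_mod_cast Nat.succ_le_of_lt (hcon V hV)
  rw [h] at hge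
  norm_cast at hge
  omega

lemma elog_shtarkov_le_entropy (F : Set (UnitFn X)) (hF : F.Nonempty) {α : ℝ} (hα : 0 < α)
    (T : ℕ) (χ : List Bool → X) :
    elog (shtarkov (bexpert '' F) T χ) ≤
      ((((T : ℝ) * Real.log (1 + 2 * α)) : ℝ) : EReal) +
        elogENat (coveringNumber F χ α T) := by
  cases hN : coveringNumber F χ α T with
  | top =>
      rw [show elogENat ⊤ = (⊤ : EReal) from rfl,
        EReal.add_top_of_ne_bot (EReal.coe_ne_bot _)]
      exact le_top
  | coe k =>
      obtain ⟨V, hV, hcard⟩ := exists_cover_of_coveringNumber_coe hN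
      have h1le : (1:ℕ) ≤ V.card := cover_card_pos hF hV
      have hVpos : (0:ℝ) < (V.card : ℝ) := by exact_mod_cast h1le
      have hppos : (0:ℝ) < (1 + 2 * α) ^ T := pow_pos (by linarith) T
      calc elog (shtarkov (bexpert '' F) T χ)
          ≤ elog ((1 + 2 * α) ^ T * (V.card : ℝ)) :=
            elog_monotone (shtarkov_le_cover F hF hα T χ V hV)
        _ = ((Real.log ((1 + 2 * α) ^ T) : ℝ) : EReal) + elog (V.card : ℝ) :=
            elog_coe_mul hppos hVpos
        _ ≤ _ := by
            rw [Real.log_pow]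
            refine add_le_add le_rfl ?_
            rw [show elogENat ((k : ℕ) : ℕ∞) = elog ((k : ℕ) : ℝ) from rfl]
            exact elog_monotone (by exact_mod_cast hcard)

end Final


/-- For every nonempty class `F ⊆ [0,1]^X` of binary-label experts and
every horizon `T ≥ 1`, the minimax regret satisfies
`R_T(F) ≤ inf_{α > 0} { T·log(1 + 2α) + H∞(F, α, T) }`. -/
theorem minimaxRegret_le_seqEntropy_bound
    {X : Type*} [Inhabited X] (F : Set (UnitFn X)) (hF : F.Nonempty)
    (T : ℕ) (hT : 1 ≤ T) :
    minimaxRegret (bexpert '' F) T ≤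
      ⨅ (α : ℝ) (_ : 0 < α),
        ((((T : ℝ) * Real.log (1 + 2 * α)) : ℝ) : EReal) + seqEntropy F α T := by
  refine le_iInf fun α => le_iInf fun hα => ?_
  have hFb : (bexpert '' F).Nonempty := hF.image _
  have h1 := valToGo_le (bexpert '' F) hFb T [] [] 0
  rw [zero_add] at h1
  refine le_trans h1 ?_
  haveI : Nonempty (List Bool → X) := ⟨fun _ => default⟩
  refine elog_ciSup_le _ _ fun χ => ?_
  refine le_trans (elog_shtarkov_le_entropy F hF hα T χ) ?_
  exact add_le_add le_rfl (le_iSup (fun χ' => elogENat (coveringNumber F χ' α T)) χ)
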